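/- Let X, K, Z be finite sets such that L := |X|/|K| is a positive integer, and let P_{XZ} be a probability distribution on X × Z whose X-marginal is the uniform distribution Q_X^unif. Then for every γ > 0 and every probability distribution Q_Z on Z with Q_Z(z) > 0 for all z, there exists a function g : X → K such that |g⁻¹(k)| = L for every k ∈ K (so that g(X) is uniformly distributed on K) and S(g(X)|Z) ≤ E_γ(P_{XZ}, Q_X^unif × Q_Z) + (1/2)·√( (γ/L)·E_{(X,Z)~P_{XZ}}[ exp(−|ı(X;Z) − log γ|) ] ). -/

import Mathlib

open Finset

noncomputable section

/-- Total variation distance between two finitely supported distributions. -/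
def tv {A : Type*} [Fintype A] (P Q : A → ℝ) : ℝ := (1 / 2) * ∑ a, |P a - Q a|

/-- The `E_γ` metric `E_γ(P,Q) = ∑_a max (P a − γ·Q a) 0`. -/
def Egamma {A : Type*} [Fintype A] (γ : ℝ) (P Q : A → ℝ) : ℝ :=
  ∑ a, max (P a - γ * Q a) 0



lemma aux_sum_apply {ι G : Type*} [Fintype ι] [DecidableEq ι] [Fintype G] (j : ι) (F : G → ℝ) :
    ∑ s : ι → G, F (s j)
      = ((Fintype.card G : ℝ) ^ (Fintype.card ι - 1)) * ∑ c, F c := by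
  have h1 : ∑ s : ι → G, F (s j) = ∑ p : G × ({i : ι // i ≠ j} → G), F p.1 :=
    Fintype.sum_equiv (Equiv.funSplitAt j G) _ _ (fun s => rfl)
  have hcard : Fintype.card ({i : ι // i ≠ j} → G) = Fintype.card G ^ (Fintype.card ι - 1) := by
    rw [Fintype.card_fun]
    congr 1
    simp [Fintype.card_subtype_compl]
  rw [h1, Fintype.sum_prod_type]
  simp [Finset.sum_const, hcard]
  rw [← Finset.mul_sum]

lemma aux_sum_apply_mul {ι G : Type*} [Fintype ι] [DecidableEq ι] [Fintype G] {j j' : ι}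
    (h : j ≠ j') (F H : G → ℝ) (hH : ∑ c, H c = 0) :
    ∑ s : ι → G, F (s j) * H (s j') = 0 := by
  have h1 : ∑ s : ι → G, F (s j) * H (s j')
      = ∑ p : G × ({i : ι // i ≠ j} → G), F p.1 * H (p.2 ⟨j', h.symm⟩) :=
    Fintype.sum_equiv (Equiv.funSplitAt j G) _ _ (fun s => rfl)
  rw [h1, Fintype.sum_prod_type]
  have h2 : ∀ c : G, ∑ t : {i : ι // i ≠ j} → G, F c * H (t ⟨j', h.symm⟩) = 0 := by
    intro c
    rw [← Finset.mul_sum, aux_sum_apply (⟨j', h.symm⟩ : {i : ι // i ≠ j}) H, hH]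
    ring
  simp [h2]

lemma aux_min_sq (P Q γ : ℝ) (hP : 0 ≤ P) (hQ : 0 < Q) (hγ : 0 < γ) :
    (min P (γ * Q))^2 ≤ γ * P * Q * Real.exp (-|Real.log (P/Q) - Real.log γ|) := by
  rcases hP.eq_or_lt with h0 | hP
  · rw [min_eq_left (by nlinarith)]
    simp [← h0]
  · have hB : 0 < γ * Q := by positivity
    have hlog : Real.log (P/Q) - Real.log γ = Real.log (P / (γ * Q)) := by
      rw [Real.log_div hP.ne' hQ.ne', Real.log_div hP.ne' hB.ne', Real.log_mul hγ.ne' hQ.ne']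
      ring
    rw [hlog]
    rcases le_total P (γ * Q) with h | h
    · rw [min_eq_left h]
      have hr : Real.log (P / (γ * Q)) ≤ 0 :=
        Real.log_nonpos (by positivity) (by rw [div_le_one hB]; exact h)
      rw [abs_of_nonpos hr, neg_neg, Real.exp_log (by positivity)]
      have heq : γ * P * Q * (P / (γ * Q)) = P^2 := by field_simp
      rw [heq]
    · rw [min_eq_right h]
      have hr : 0 ≤ Real.log (P / (γ * Q)) :=
        Real.log_nonneg (by rw [le_div_iff₀ hB]; nlinarith)
      rw [abs_of_nonneg hr]
      have : Real.exp (-Real.log (P / (γ * Q))) = (γ * Q) / P := by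
        rw [← Real.log_inv, Real.exp_log (by positivity)]
        field_simp
      rw [this]
      have heq : γ * P * Q * (γ * Q / P) = (γ * Q)^2 := by field_simp
      rw [heq]

lemma aux_centered {G : Type*} [Fintype G] (f : G → ℝ) :
    ∑ c, (f c - (Fintype.card G : ℝ)⁻¹ * ∑ c', f c')^2 ≤ ∑ c, (f c)^2 := by
  rcases Nat.eq_zero_or_pos (Fintype.card G) with h0 | hpos
  · haveI := Fintype.card_eq_zero_iff.mp h0
    simp
  · set n : ℝ := (Fintype.card G : ℝ) with hn
    have hn0 : 0 < n := by rw [hn]; exact_mod_cast hpos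
    set μ : ℝ := n⁻¹ * ∑ c', f c' with hμ
    have hsum : ∑ c', f c' = n * μ := by
      rw [hμ]; field_simp
    have hexp : ∑ c, (f c - μ)^2 = (∑ c, (f c)^2) - 2*μ*(∑ c', f c') + n*μ^2 := by
      have : ∀ c, (f c - μ)^2 = (f c)^2 - 2*μ*(f c) + μ^2 := fun c => by ring
      rw [Finset.sum_congr rfl (fun c _ => this c)]
      rw [Finset.sum_add_distrib, Finset.sum_sub_distrib, ← Finset.mul_sum,
        Finset.sum_const, Finset.card_univ]
      rw [hn, nsmul_eq_mul]
    rw [hexp, hsum]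
    nlinarith [sq_nonneg μ, hn0.le]

lemma aux_sub_min (a b : ℝ) : a - min a b = max (a - b) 0 := by
  rcases le_total a b with h | h
  · rw [min_eq_left h, max_eq_right (by linarith), sub_self]
  · rw [min_eq_right h, max_eq_left (by linarith)]

/-- privacy amplification with uniform output: if `L = |X|/|K|` is a
positive integer and the `X`-marginal of `P_{XZ}` is uniform, then for every `γ > 0`
and every fully supported `Q_Z` there exists `g : X → K` with `|g⁻¹(k)| = L` for every
`k` (hence `g(X)` is uniform on `K`) satisfying the privacy amplification bound. -/
theorem privacy_amplification_uniform
    {X K Z : Type*} [Fintype X] [Fintype K] [Fintype Z]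
    [Nonempty X] [Nonempty K] [DecidableEq K]
    (L : ℕ) (hL : 0 < L) (hcard : Fintype.card X = L * Fintype.card K)
    (PXZ : X × Z → ℝ)
    (hpos : ∀ q, 0 ≤ PXZ q) (hsum : ∑ q, PXZ q = 1)
    (hunif : ∀ x, ∑ z, PXZ (x, z) = (Fintype.card X : ℝ)⁻¹)
    (γ : ℝ) (hγ : 0 < γ)
    (QZ : Z → ℝ) (hQpos : ∀ z, 0 < QZ z) (hQsum : ∑ z, QZ z = 1) :
    ∃ g : X → K,
      (∀ k, (univ.filter (fun x => g x = k)).card = L) ∧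
      tv (fun q : K × Z => ∑ x ∈ univ.filter (fun x => g x = q.1), PXZ (x, q.2))
         (fun q : K × Z => (Fintype.card K : ℝ)⁻¹ * ∑ x, PXZ (x, q.2))
        ≤ Egamma γ PXZ (fun q : X × Z => (Fintype.card X : ℝ)⁻¹ * QZ q.2)
          + (1 / 2) * Real.sqrt ((γ / (L : ℝ)) *
              ∑ q : X × Z, PXZ q *
                Real.exp (-|Real.log (PXZ q / ((Fintype.card X : ℝ)⁻¹ * QZ q.2))
                  - Real.log γ|)) := by
  classical
  set m := Fintype.card K with hmdef
  have hm0 : 0 < m := Fintype.card_pos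
  haveI : NeZero m := ⟨hm0.ne'⟩
  have hN0 : 0 < Fintype.card X := Fintype.card_pos
  set N := Fintype.card X with hNdef
  obtain ⟨e⟩ : Nonempty (X ≃ K × Fin L) :=
    ⟨Fintype.equivOfCardEq (by simp [hcard, mul_comm, ← hmdef, ← hNdef])⟩
  obtain ⟨κ⟩ : Nonempty (K ≃ ZMod m) := ⟨Fintype.equivOfCardEq (by simp [ZMod.card, ← hmdef])⟩
  -- the pointwise min and excess
  set A : X → Z → ℝ := fun x z => min (PXZ (x, z)) (γ * ((N : ℝ)⁻¹ * QZ z)) with hAdef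
  set Dx : X → Z → ℝ := fun x z => PXZ (x, z) - A x z with hDxdef
  have hDxmax : ∀ x z, Dx x z = max (PXZ (x, z) - γ * ((N : ℝ)⁻¹ * QZ z)) 0 := fun x z =>
    aux_sub_min _ _
  have hDx0 : ∀ x z, 0 ≤ Dx x z := fun x z => by rw [hDxmax]; exact le_max_right _ _
  have hA0 : ∀ x z, 0 ≤ A x z := fun x z =>
    le_min (hpos _) (by have := (hQpos z); positivity)
  -- the family of balanced maps
  set g : (Fin L → ZMod m) → X → K := fun s x => κ.symm (κ (e x).1 + s (e x).2) with hgdef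
  -- fibers
  have hfib : ∀ s k, univ.filter (fun x => g s x = k)
      = image (fun j : Fin L => e.symm (κ.symm (κ k - s j), j)) univ := by
    intro s k
    ext x
    simp only [mem_filter, mem_univ, true_and, mem_image]
    constructor
    · intro hx
      refine ⟨(e x).2, ?_⟩
      have : κ (e x).1 + s (e x).2 = κ k := by
        have := congrArg κ hx
        simpa [hgdef] using this
      have h1 : (e x).1 = κ.symm (κ k - s (e x).2) := by
        rw [← this]; simp
      rw [Equiv.symm_apply_eq]
      exact Prod.ext h1.symm rfl
    · rintro ⟨j, rfl⟩
      simp [hgdef]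
  have hinj : ∀ k (s : Fin L → ZMod m), Function.Injective
      (fun j : Fin L => e.symm (κ.symm (κ k - s j), j)) := by
    intro k s j j' h
    have := congrArg (fun x => (e x).2) h
    simpa using this
  have hbal : ∀ s k, (univ.filter (fun x => g s x = k)).card = L := by
    intro s k
    rw [hfib, Finset.card_image_of_injective _ (hinj k s)]
    simp
  have hfibsum : ∀ (s : Fin L → ZMod m) (k : K) (h : X → ℝ),
      ∑ x ∈ univ.filter (fun x => g s x = k), h x
        = ∑ j : Fin L, h (e.symm (κ.symm (κ k - s j), j)) := by
    intro s k h
    rw [hfib, Finset.sum_image (fun a _ b _ hab => hinj k s hab)]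
  have hfull : ∀ (h : X → ℝ),
      ∑ x, h x = ∑ j : Fin L, ∑ c : ZMod m, h (e.symm (κ.symm c, j)) := by
    intro h
    rw [← Equiv.sum_comp e.symm h, Fintype.sum_prod_type, Finset.sum_comm]
    exact Finset.sum_congr rfl fun j _ =>
      (Equiv.sum_comp κ.symm (fun k' => h (e.symm (k', j)))).symm
  -- block coefficients
  set a : Z → Fin L → ZMod m → ℝ := fun z j c => A (e.symm (κ.symm c, j)) z with hadef
  set b : Z → Fin L → ZMod m → ℝ :=
    fun z j c => a z j c - (m : ℝ)⁻¹ * ∑ c', a z j c' with hbdef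
  have hbsum : ∀ z j, ∑ c, b z j c = 0 := by
    intro z j
    have hmne : (m : ℝ) ≠ 0 := Nat.cast_ne_zero.mpr hm0.ne'
    simp only [hbdef, Finset.sum_sub_distrib, Finset.sum_const, card_univ, ZMod.card,
      nsmul_eq_mul]
    field_simp
    ring
  have hbb : ∀ z j, ∑ c, (b z j c)^2 ≤ ∑ c, (a z j c)^2 := by
    intro z j
    have := aux_centered (a z j)
    simpa [ZMod.card, hbdef] using this
  set D : (Fin L → ZMod m) → K → Z → ℝ := fun s k z =>
      (∑ x ∈ univ.filter (fun x => g s x = k), A x z) - (m : ℝ)⁻¹ * ∑ x, A x z with hDdef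
  have hD : ∀ s k z, D s k z = ∑ j, b z j (κ k - s j) := by
    intro s k z
    simp only [hDdef, hbdef, hadef]
    rw [hfibsum s k (fun x => A x z), hfull (fun x => A x z)]
    rw [Finset.sum_sub_distrib, ← Finset.mul_sum]
  have hsub : ∀ (f : ZMod m → ℝ) (k : K), ∑ c, f (κ k - c) = ∑ c, f c := by
    intro f k
    have := Equiv.sum_comp (Equiv.subLeft (κ k)) f
    simpa [Equiv.subLeft] using this
  have hsm : ∀ k z, ∑ s : Fin L → ZMod m, (D s k z)^2
      = (m : ℝ)^(L-1) * ∑ j, ∑ c, (b z j c)^2 := by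
    intro k z
    have h2 : ∀ j j' : Fin L, ∑ s : Fin L → ZMod m,
        b z j (κ k - s j) * b z j' (κ k - s j')
        = if j = j' then (m : ℝ)^(L-1) * ∑ c, (b z j c)^2 else 0 := by
      intro j j'
      by_cases h : j = j'
      · subst h
        rw [if_pos rfl]
        have h3 := aux_sum_apply (ι := Fin L) (G := ZMod m) j
          (fun c => b z j (κ k - c) * b z j (κ k - c))
        simp only [ZMod.card, Fintype.card_fin] at h3
        rw [h3]
        congr 1
        rw [← hsub (fun c => (b z j c)^2) k]
        exact Finset.sum_congr rfl fun c _ => (sq _).symm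
      · rw [if_neg h]
        exact aux_sum_apply_mul h (fun c => b z j (κ k - c)) (fun c => b z j' (κ k - c))
          (by rw [hsub (b z j') k]; exact hbsum z j')
    calc ∑ s : Fin L → ZMod m, (D s k z)^2
        = ∑ s : Fin L → ZMod m, ∑ j, ∑ j', b z j (κ k - s j) * b z j' (κ k - s j') := by
          refine Finset.sum_congr rfl fun s _ => ?_
          rw [hD, sq, Finset.sum_mul_sum]
      _ = ∑ j, ∑ j', ∑ s : Fin L → ZMod m, b z j (κ k - s j) * b z j' (κ k - s j') := by
          rw [Finset.sum_comm]
          exact Finset.sum_congr rfl fun j _ => Finset.sum_comm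
      _ = ∑ j : Fin L, ((m : ℝ)^(L-1) * ∑ c, (b z j c)^2) := by
          refine Finset.sum_congr rfl fun j _ => ?_
          rw [Finset.sum_congr rfl fun j' _ => h2 j j', Finset.sum_ite_eq]
          simp
      _ = (m : ℝ)^(L-1) * ∑ j, ∑ c, (b z j c)^2 := by rw [Finset.mul_sum]
  -- the weighted squared deviation and the target quantity
  set T : (Fin L → ZMod m) → ℝ := fun s => ∑ q : K × Z, |D s q.1 q.2| with hTdef
  set W : (Fin L → ZMod m) → ℝ :=
    fun s => ∑ q : K × Z, ((m : ℝ) / QZ q.2) * (D s q.1 q.2)^2 with hWdef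
  set V : ℝ := (γ / (L : ℝ)) * ∑ q : X × Z, PXZ q *
      Real.exp (-|Real.log (PXZ q / ((N : ℝ)⁻¹ * QZ q.2)) - Real.log γ|) with hVdef
  have hkey : ∀ x z, ((m : ℝ) / QZ z) * (A x z)^2
      ≤ (γ / (L : ℝ)) * (PXZ (x, z) *
        Real.exp (-|Real.log (PXZ (x, z) / ((N : ℝ)⁻¹ * QZ z)) - Real.log γ|)) := by
    intro x z
    have hQz := hQpos z
    have hNpos : (0 : ℝ) < (N : ℝ)⁻¹ * QZ z := by positivity
    have h1 := aux_min_sq (PXZ (x, z)) ((N : ℝ)⁻¹ * QZ z) γ (hpos _) hNpos hγ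
    have h2 : ((m : ℝ) / QZ z) * (γ * PXZ (x, z) * ((N : ℝ)⁻¹ * QZ z) *
        Real.exp (-|Real.log (PXZ (x, z) / ((N : ℝ)⁻¹ * QZ z)) - Real.log γ|))
        = (γ / (L : ℝ)) * (PXZ (x, z) *
        Real.exp (-|Real.log (PXZ (x, z) / ((N : ℝ)⁻¹ * QZ z)) - Real.log γ|)) := by
      have hNL : (N : ℝ) = (L : ℝ) * (m : ℝ) := by exact_mod_cast hcard
      have hL0 : (0 : ℝ) < (L : ℝ) := by exact_mod_cast hL
      have hm0' : (0 : ℝ) < (m : ℝ) := by exact_mod_cast hm0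
      rw [hNL]
      field_simp
    calc ((m : ℝ) / QZ z) * (A x z)^2
        ≤ ((m : ℝ) / QZ z) * (γ * PXZ (x, z) * ((N : ℝ)⁻¹ * QZ z) *
            Real.exp (-|Real.log (PXZ (x, z) / ((N : ℝ)⁻¹ * QZ z)) - Real.log γ|)) :=
          mul_le_mul_of_nonneg_left h1 (by positivity)
      _ = _ := h2
  have hinner : ∑ z, ((m : ℝ) / QZ z) * ∑ j, ∑ c, (b z j c)^2 ≤ V := by
    calc ∑ z, ((m : ℝ) / QZ z) * ∑ j, ∑ c, (b z j c)^2
        ≤ ∑ z, ((m : ℝ) / QZ z) * ∑ x, (A x z)^2 := by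
          refine Finset.sum_le_sum fun z _ => ?_
          refine mul_le_mul_of_nonneg_left ?_ (by have := hQpos z; positivity)
          rw [hfull (fun x => (A x z)^2)]
          exact Finset.sum_le_sum fun j _ => hbb z j
      _ ≤ ∑ z, ∑ x, (γ / (L : ℝ)) * (PXZ (x, z) *
            Real.exp (-|Real.log (PXZ (x, z) / ((N : ℝ)⁻¹ * QZ z)) - Real.log γ|)) := by
          refine Finset.sum_le_sum fun z _ => ?_
          rw [Finset.mul_sum]
          exact Finset.sum_le_sum fun x _ => hkey x z
      _ = V := by
          rw [hVdef, Finset.mul_sum, Fintype.sum_prod_type, Finset.sum_comm]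
  have hsW : ∑ s : Fin L → ZMod m, W s ≤ ∑ s : Fin L → ZMod m, V := by
    have hcardΩ : (Fintype.card (Fin L → ZMod m) : ℝ) = (m : ℝ)^L := by
      simp [Fintype.card_fun, ZMod.card]
    have e1 : ∑ s : Fin L → ZMod m, W s
        = (m : ℝ)^(L-1) * ∑ q : K × Z, ((m : ℝ) / QZ q.2) * ∑ j, ∑ c, (b q.2 j c)^2 := by
      rw [hWdef, Finset.sum_comm, Finset.mul_sum]
      refine Finset.sum_congr rfl fun q _ => ?_
      rw [← Finset.mul_sum, hsm q.1 q.2]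
      ring
    have e2 : ∑ q : K × Z, ((m : ℝ) / QZ q.2) * ∑ j, ∑ c, (b q.2 j c)^2
        ≤ (m : ℝ) * V := by
      rw [Fintype.sum_prod_type]
      calc ∑ k : K, ∑ z, ((m : ℝ) / QZ z) * ∑ j, ∑ c, (b z j c)^2
          ≤ ∑ _k : K, V := Finset.sum_le_sum fun k _ => hinner
        _ = (m : ℝ) * V := by rw [Finset.sum_const, card_univ, nsmul_eq_mul, hmdef]
    rw [Finset.sum_const, card_univ, nsmul_eq_mul, hcardΩ, e1]
    calc (m : ℝ)^(L-1) * ∑ q : K × Z, ((m : ℝ) / QZ q.2) * ∑ j, ∑ c, (b q.2 j c)^2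
        ≤ (m : ℝ)^(L-1) * ((m : ℝ) * V) :=
          mul_le_mul_of_nonneg_left e2 (by positivity)
      _ = (m : ℝ)^L * V := by
          rw [← mul_assoc, ← pow_succ]
          congr 2
          omega
  obtain ⟨s, -, hWsV⟩ := Finset.exists_le_of_sum_le Finset.univ_nonempty hsW
  -- Cauchy–Schwarz: T s ≤ √(W s)
  have hT0 : 0 ≤ T s := Finset.sum_nonneg fun q _ => abs_nonneg _
  have hW0 : 0 ≤ W s := Finset.sum_nonneg fun q _ => by
    have := hQpos q.2; positivity
  have hTW : (T s)^2 ≤ W s := by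
    have hcs := Finset.sum_mul_sq_le_sq_mul_sq Finset.univ
      (fun q : K × Z => Real.sqrt (QZ q.2 / (m : ℝ)))
      (fun q : K × Z => |D s q.1 q.2| / Real.sqrt (QZ q.2 / (m : ℝ)))
    have hfg : ∀ q : K × Z, Real.sqrt (QZ q.2 / (m : ℝ)) *
        (|D s q.1 q.2| / Real.sqrt (QZ q.2 / (m : ℝ))) = |D s q.1 q.2| := by
      intro q
      have h0 : Real.sqrt (QZ q.2 / (m : ℝ)) ≠ 0 := by
        have := hQpos q.2
        positivity
      rw [mul_comm, div_mul_cancel₀ _ h0]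
    have hf2 : ∑ q : K × Z, (Real.sqrt (QZ q.2 / (m : ℝ)))^2 = 1 := by
      have hstep : ∀ q : K × Z, (Real.sqrt (QZ q.2 / (m : ℝ)))^2 = QZ q.2 / (m : ℝ) := by
        intro q
        exact Real.sq_sqrt (by have := hQpos q.2; positivity)
      have hm' : ((m : ℝ)) ≠ 0 := Nat.cast_ne_zero.mpr hm0.ne'
      have h2 : ∑ z, QZ z / (m : ℝ) = 1/(m : ℝ) := by rw [← Finset.sum_div, hQsum]
      calc ∑ q : K × Z, (Real.sqrt (QZ q.2 / (m : ℝ)))^2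
          = ∑ q : K × Z, QZ q.2 / (m : ℝ) := Finset.sum_congr rfl fun q _ => hstep q
        _ = ∑ _k : K, ∑ z, QZ z / (m : ℝ) := by rw [Fintype.sum_prod_type]
        _ = ∑ _k : K, 1/(m : ℝ) := Finset.sum_congr rfl fun k _ => h2
        _ = 1 := by
            rw [Finset.sum_const, card_univ, nsmul_eq_mul, ← hmdef]
            field_simp
    have hg2 : ∀ q : K × Z, (|D s q.1 q.2| / Real.sqrt (QZ q.2 / (m : ℝ)))^2
        = ((m : ℝ) / QZ q.2) * (D s q.1 q.2)^2 := by
      intro q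
      have hq := hQpos q.2
      have hm' : (0:ℝ) < (m:ℝ) := by exact_mod_cast hm0
      rw [div_pow, Real.sq_sqrt (by positivity), sq_abs, div_div_eq_mul_div]
      ring
    calc (T s)^2 = (∑ q : K × Z, Real.sqrt (QZ q.2 / (m : ℝ)) *
          (|D s q.1 q.2| / Real.sqrt (QZ q.2 / (m : ℝ))))^2 := by
          rw [hTdef, Finset.sum_congr rfl fun q _ => (hfg q)]
      _ ≤ (∑ q : K × Z, (Real.sqrt (QZ q.2 / (m : ℝ)))^2) *
          ∑ q : K × Z, (|D s q.1 q.2| / Real.sqrt (QZ q.2 / (m : ℝ)))^2 := hcs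
      _ = W s := by
          rw [hf2, one_mul, hWdef, Finset.sum_congr rfl fun q _ => hg2 q]
  have hTs : T s ≤ Real.sqrt V := by
    have h1 : T s ≤ Real.sqrt (W s) := by
      nlinarith [Real.sq_sqrt hW0, Real.sqrt_nonneg (W s), sq_nonneg (T s - Real.sqrt (W s))]
    exact h1.trans (Real.sqrt_le_sqrt hWsV)
  -- the Egamma value
  have hEg : Egamma γ PXZ (fun q : X × Z => (N : ℝ)⁻¹ * QZ q.2) = ∑ z, ∑ x, Dx x z := by
    rw [Egamma, Fintype.sum_prod_type, Finset.sum_comm]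
    exact Finset.sum_congr rfl fun z _ => Finset.sum_congr rfl fun x _ => (hDxmax x z).symm
  refine ⟨g s, hbal s, ?_⟩
  have hmR : (0:ℝ) < (m : ℝ) := by exact_mod_cast hm0
  -- pointwise bound on each |P_g - U|
  have hpoint : ∀ q : K × Z,
      |(∑ x ∈ univ.filter (fun x => g s x = q.1), PXZ (x, q.2))
        - (m : ℝ)⁻¹ * ∑ x, PXZ (x, q.2)|
      ≤ |D s q.1 q.2| + ((∑ x ∈ univ.filter (fun x => g s x = q.1), Dx x q.2)
          + (m : ℝ)⁻¹ * ∑ x, Dx x q.2) := by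
    intro q
    have hsplit : (∑ x ∈ univ.filter (fun x => g s x = q.1), PXZ (x, q.2))
        - (m : ℝ)⁻¹ * ∑ x, PXZ (x, q.2)
        = D s q.1 q.2 + ((∑ x ∈ univ.filter (fun x => g s x = q.1), Dx x q.2)
            - (m : ℝ)⁻¹ * ∑ x, Dx x q.2) := by
      have h1 : ∀ x, PXZ (x, q.2) = A x q.2 + Dx x q.2 := fun x => by
        simp [hDxdef]
      rw [Finset.sum_congr rfl fun x _ => h1 x,
        Finset.sum_congr rfl (fun (x : X) (_ : x ∈ (univ : Finset X)) => h1 x),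
        Finset.sum_add_distrib, Finset.sum_add_distrib, hDdef]
      ring
    rw [hsplit]
    refine (abs_add_le _ _).trans ?_
    gcongr
    have hu : (0:ℝ) ≤ ∑ x ∈ univ.filter (fun x => g s x = q.1), Dx x q.2 :=
      Finset.sum_nonneg fun x _ => hDx0 x q.2
    have hv : (0:ℝ) ≤ (m : ℝ)⁻¹ * ∑ x, Dx x q.2 := by
      have h' : (0:ℝ) ≤ ∑ x, Dx x q.2 := Finset.sum_nonneg fun x _ => hDx0 x q.2
      positivity
    exact abs_le.mpr ⟨by linarith, by linarith⟩
  -- summing the fiber excesses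
  have hsumDx1 : ∑ q : K × Z, ∑ x ∈ univ.filter (fun x => g s x = q.1), Dx x q.2
      = ∑ z, ∑ x, Dx x z := by
    rw [Fintype.sum_prod_type, Finset.sum_comm]
    exact Finset.sum_congr rfl fun z _ => Finset.sum_fiberwise univ (g s) (fun x => Dx x z)
  have hsumDx2 : ∑ q : K × Z, (m : ℝ)⁻¹ * ∑ x, Dx x q.2 = ∑ z, ∑ x, Dx x z := by
    rw [Fintype.sum_prod_type]
    calc ∑ _k : K, ∑ z, (m : ℝ)⁻¹ * ∑ x, Dx x z
        = (m : ℝ) * ((m : ℝ)⁻¹ * ∑ z, ∑ x, Dx x z) := by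
          rw [Finset.sum_const, card_univ, nsmul_eq_mul, ← hmdef, ← Finset.mul_sum]
      _ = ∑ z, ∑ x, Dx x z := by field_simp
  -- final computation
  rw [tv, hEg]
  have hbound : ∑ q : K × Z,
      |(∑ x ∈ univ.filter (fun x => g s x = q.1), PXZ (x, q.2))
        - (m : ℝ)⁻¹ * ∑ x, PXZ (x, q.2)|
      ≤ T s + 2 * ∑ z, ∑ x, Dx x z := by
    calc ∑ q : K × Z, |(∑ x ∈ univ.filter (fun x => g s x = q.1), PXZ (x, q.2))
          - (m : ℝ)⁻¹ * ∑ x, PXZ (x, q.2)|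
        ≤ ∑ q : K × Z, (|D s q.1 q.2| + ((∑ x ∈ univ.filter (fun x => g s x = q.1), Dx x q.2)
            + (m : ℝ)⁻¹ * ∑ x, Dx x q.2)) := Finset.sum_le_sum fun q _ => hpoint q
      _ = T s + 2 * ∑ z, ∑ x, Dx x z := by
          rw [Finset.sum_add_distrib, Finset.sum_add_distrib, hsumDx1, hsumDx2, hTdef]
          ring
  have hfinal : (1/2 : ℝ) * (T s + 2 * ∑ z, ∑ x, Dx x z)
      ≤ (∑ z, ∑ x, Dx x z) + 1/2 * Real.sqrt V := by
    nlinarith [hTs]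
  calc (1/2 : ℝ) * ∑ q : K × Z,
        |(∑ x ∈ univ.filter (fun x => g s x = q.1), PXZ (x, q.2))
          - (m : ℝ)⁻¹ * ∑ x, PXZ (x, q.2)|
      ≤ (1/2 : ℝ) * (T s + 2 * ∑ z, ∑ x, Dx x z) := by linarith [hbound]
    _ ≤ (∑ z, ∑ x, Dx x z) + 1/2 * Real.sqrt V := hfinal
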